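/- Suppose the number of flows generated over a frame is Poisson(λT) with λ, T > 0, each generated flow contends independently with probability p ∈ [0,1], and each contending flow picks one of cN_C contention blocks uniformly at random (c, N_C ∈ ℕ positive). Then the expected number of contention blocks selected by exactly one contending flow (i.e., the expected number of successful admission requests received by the master during one contention phase) equals λTp · e^{−λTp/(cN_C)}. -/

import Mathlib

open MeasureTheory

lemma poisson_thin_hasSum (μ q : ℝ) :
    HasSum (fun n : ℕ => Real.exp (-μ) * μ ^ n / n.factorial *
      ((n : ℝ) * q * (1 - q) ^ (n - 1))) (μ * q * Real.exp (-(μ * q))) := by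
  have h1 : HasSum (fun n : ℕ => (μ * (1 - q)) ^ n / n.factorial)
      (Real.exp (μ * (1 - q))) := by
    rw [Real.exp_eq_exp_ℝ]
    exact NormedSpace.expSeries_div_hasSum_exp _
  have h2 := h1.mul_left (Real.exp (-μ) * μ * q)
  have heq : (fun n : ℕ => Real.exp (-μ) * μ * q * ((μ * (1 - q)) ^ n / n.factorial))
      = fun n : ℕ => Real.exp (-μ) * μ ^ (n + 1) / (n + 1).factorial *
        (((n + 1 : ℕ) : ℝ) * q * (1 - q) ^ ((n + 1) - 1)) := by
    funext n
    have hfac : ((n + 1).factorial : ℝ) = (n + 1 : ℝ) * (n.factorial : ℝ) := by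
      push_cast [Nat.factorial_succ]; ring
    have hn0 : (n + 1 : ℝ) ≠ 0 := by positivity
    have hf0 : (n.factorial : ℝ) ≠ 0 := Nat.cast_ne_zero.2 n.factorial_ne_zero
    rw [hfac]
    push_cast
    rw [mul_pow]
    field_simp
    ring
  rw [heq] at h2
  have h3 := (hasSum_nat_add_iff (f := fun n : ℕ => Real.exp (-μ) * μ ^ n / n.factorial *
      ((n : ℝ) * q * (1 - q) ^ (n - 1))) 1).1 h2
  simpa [← Real.exp_add, show -μ + μ * (1 - q) = -(μ * q) by ring,
    mul_comm, mul_assoc, mul_left_comm] using h3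

/-- **Expected number of successful admission requests per contention phase.**
The number `N` of flows generated over a frame is Poisson(`λT`); each flow
contends independently with probability `p` and, if it contends, picks one of
the `c·N_C` contention blocks uniformly at random.  Hence, for each block `j`,
given `N = n` the number `B j` of contenders selecting block `j` is
Binomial(`n`, `p · 1/(c·N_C)`).  Then the expected number of blocks selected by
exactly one contending flow (successful admission requests) equals
`λTp · e^{−λTp/(c·N_C)}`. -/
theorem expected_successful_requests {Ω : Type*} [MeasurableSpace Ω]
    (P : Measure Ω) [IsProbabilityMeasure P]
    (lam T p : ℝ) (hlam : 0 < lam) (hT : 0 < T) (hp0 : 0 ≤ p) (hp1 : p ≤ 1)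
    (c NC : ℕ) (hc : 0 < c) (hNC : 0 < NC)
    (N : Ω → ℕ) (B : Fin (c * NC) → Ω → ℕ)
    (hN : Measurable N) (hB : ∀ j, Measurable (B j))
    (hNpois : ∀ n : ℕ,
      P {ω | N ω = n} =
        ENNReal.ofReal (Real.exp (-(lam * T)) * (lam * T) ^ n / n.factorial))
    (hcond : ∀ (j : Fin (c * NC)) (n k : ℕ),
      P {ω | N ω = n ∧ B j ω = k} =
        P {ω | N ω = n} *
          ENNReal.ofReal ((n.choose k : ℝ) * (p * (1 / ((c : ℝ) * NC))) ^ k *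
            (1 - p * (1 / ((c : ℝ) * NC))) ^ (n - k))) :
    ∫ ω, ((Finset.univ.filter (fun j : Fin (c * NC) => B j ω = 1)).card : ℝ) ∂P =
      lam * T * p * Real.exp (-(lam * T * p / ((c : ℝ) * NC))) := by
  have hcNC : (0 : ℝ) < (c : ℝ) * NC := by positivity
  set q : ℝ := p * (1 / ((c : ℝ) * NC)) with hqdef
  have hq0 : 0 ≤ q := by positivity
  set μ : ℝ := lam * T with hμdef
  have hμ0 : 0 ≤ μ := by positivity
  set f : ℕ → ℝ := fun n => Real.exp (-μ) * μ ^ n / n.factorial *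
      ((n : ℝ) * q * (1 - q) ^ (n - 1)) with hfdef
  have hsum := poisson_thin_hasSum μ q
  have hf0 : ∀ n, 0 ≤ f n := by
    intro n
    have : (1 - q) ^ (n - 1) = ((1 - q) ^ (n-1)) := rfl
    have hq1 : q ≤ 1 := by
      rw [hqdef]
      calc p * (1 / ((c : ℝ) * NC)) ≤ 1 * 1 := by
            apply mul_le_mul hp1 _ (by positivity) zero_le_one
            rw [div_le_one hcNC]
            have : (1:ℝ) ≤ (c:ℝ) := by exact_mod_cast hc
            have : (1:ℝ) ≤ (NC:ℝ) := by exact_mod_cast hNC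
            nlinarith [show (1:ℝ) ≤ (c:ℝ) from by exact_mod_cast hc]
        _ = 1 := by ring
    have h1q : 0 ≤ 1 - q := by linarith
    have := Real.exp_pos (-μ)
    positivity
  -- probability that block j gets exactly one flow
  have key : ∀ j : Fin (c * NC), P ((B j) ⁻¹' {1}) =
      ENNReal.ofReal (μ * q * Real.exp (-(μ * q))) := by
    intro j
    have hset : (B j) ⁻¹' {1} = ⋃ n : ℕ, {ω | N ω = n ∧ B j ω = 1} := by
      ext ω
      simp only [Set.mem_preimage, Set.mem_singleton_iff, Set.mem_iUnion, Set.mem_setOf_eq]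
      exact ⟨fun h => ⟨N ω, rfl, h⟩, fun ⟨n, _, h⟩ => h⟩
    have hmeas : ∀ n : ℕ, MeasurableSet {ω | N ω = n ∧ B j ω = 1} := by
      intro n
      exact (hN (measurableSet_singleton n)).inter ((hB j) (measurableSet_singleton 1))
    have hdisj : Pairwise (Function.onFun Disjoint
        fun n : ℕ => {ω | N ω = n ∧ B j ω = 1}) := by
      intro m n hmn
      simp only [Function.onFun, Set.disjoint_left, Set.mem_setOf_eq]
      rintro ω ⟨h1, -⟩ ⟨h2, -⟩
      exact hmn (h1 ▸ h2 ▸ rfl)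
    rw [hset, measure_iUnion hdisj hmeas]
    have hterm : ∀ n : ℕ, P {ω | N ω = n ∧ B j ω = 1} = ENNReal.ofReal (f n) := by
      intro n
      rw [hcond j n 1, hNpois n, ← ENNReal.ofReal_mul (by positivity)]
      congr 1
      simp only [hfdef, Nat.choose_one_right, pow_one, hqdef]
      try ring
    simp_rw [hterm]
    rw [← ENNReal.ofReal_tsum_of_nonneg hf0 hsum.summable, hsum.tsum_eq]
  -- rewrite the integrand as a sum of indicators
  have hint : ∀ ω, ((Finset.univ.filter (fun j : Fin (c * NC) => B j ω = 1)).card : ℝ)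
      = ∑ j : Fin (c * NC), Set.indicator ((B j) ⁻¹' {1}) (fun _ => (1:ℝ)) ω := by
    intro ω
    rw [Finset.card_filter]
    push_cast
    refine Finset.sum_congr rfl fun j _ => ?_
    by_cases h : B j ω = 1 <;> simp [Set.indicator, h]
  have hms : ∀ j : Fin (c * NC), MeasurableSet ((B j) ⁻¹' {1}) :=
    fun j => (hB j) (measurableSet_singleton 1)
  have hintg : ∀ j : Fin (c * NC),
      Integrable (fun ω => Set.indicator ((B j) ⁻¹' {1}) (fun _ => (1:ℝ)) ω) P :=
    fun j => (integrable_const (1:ℝ)).indicator (hms j)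
  calc ∫ ω, ((Finset.univ.filter (fun j : Fin (c * NC) => B j ω = 1)).card : ℝ) ∂P
      = ∫ ω, ∑ j : Fin (c * NC), Set.indicator ((B j) ⁻¹' {1}) (fun _ => (1:ℝ)) ω ∂P := by
        simp_rw [hint]
    _ = ∑ j : Fin (c * NC), ∫ ω, Set.indicator ((B j) ⁻¹' {1}) (fun _ => (1:ℝ)) ω ∂P :=
        integral_finset_sum _ (fun j _ => hintg j)
    _ = ∑ j : Fin (c * NC), (P ((B j) ⁻¹' {1})).toReal := by
        refine Finset.sum_congr rfl fun j _ => ?_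
        rw [integral_indicator_const (1:ℝ) (hms j)]
        simp [measureReal_def]
    _ = ∑ j : Fin (c * NC), (μ * q * Real.exp (-(μ * q))) := by
        refine Finset.sum_congr rfl fun j _ => ?_
        rw [key j, ENNReal.toReal_ofReal (by positivity)]
    _ = ((c * NC : ℕ) : ℝ) * (μ * q * Real.exp (-(μ * q))) := by
        rw [Finset.sum_const, Finset.card_univ, Fintype.card_fin, nsmul_eq_mul]
    _ = lam * T * p * Real.exp (-(lam * T * p / ((c : ℝ) * NC))) := by
        have hμq : μ * q = lam * T * p / ((c : ℝ) * NC) := by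
          rw [hμdef, hqdef]; field_simp
        rw [hμq]
        have : ((c * NC : ℕ) : ℝ) = (c : ℝ) * NC := by push_cast; ring
        rw [this]
        field_simp
        try ring
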